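/- Let K ≠ 0, N ≥ 2, m ∈ {1,...,N}, a^i ≠ 0 for i ≠ m, a^m = 0, and u ∈ ℝ^N with u^m ≠ 0. Define g^{ij}(u) = a^i δ^{ij} - K u^i u^j, and define the matrix G by: G_{mm} = -(1/(K (u^m)^2))(1 - K Σ_{s≠m} (u^s)^2/a^s), G_{im} = G_{mi} = -(1/a^i)(u^i/u^m) for i ≠ m, G_{ii} = 1/a^i for i ≠ m, and G_{ij} = 0 for i ≠ j with i,j ≠ m. Then Σ_s g^{is}(u) G_{sj}(u) = δ^i_j for all i,j. -/

import Mathlib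

/-- explicit inverse (covariant metric) in the degenerate case
`aᵐ = 0`, `K ≠ 0`, `uᵐ ≠ 0`. -/
theorem model_metric_inverse_degenerate (N : ℕ) (hN : 2 ≤ N) (K : ℝ) (hK : K ≠ 0)
    (m : Fin N) (a : Fin N → ℝ) (ham : a m = 0) (ha : ∀ i, i ≠ m → a i ≠ 0)
    (u : Fin N → ℝ) (hum : u m ≠ 0)
    (G : Fin N → Fin N → ℝ)
    (hGmm : G m m = -(1 / (K * (u m) ^ 2)) *
      (1 - K * ∑ s ∈ Finset.univ.erase m, (u s) ^ 2 / a s))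
    (hGim : ∀ i, i ≠ m → G i m = -(1 / a i) * (u i / u m))
    (hGmi : ∀ i, i ≠ m → G m i = -(1 / a i) * (u i / u m))
    (hGii : ∀ i, i ≠ m → G i i = 1 / a i)
    (hGij : ∀ i j, i ≠ j → i ≠ m → j ≠ m → G i j = 0) :
    ∀ i j : Fin N,
      ∑ s, (a i * (if i = s then (1 : ℝ) else 0) - K * u i * u s) * G s j
        = if i = j then 1 else 0 := by
  have key : ∀ jj : Fin N, ∑ s, u s * G s jj = if jj = m then -1 / (K * u m) else 0 := by
    intro jj
    rw [← Finset.add_sum_erase _ _ (Finset.mem_univ m)]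
    by_cases hj : jj = m
    · subst hj
      have hsum : ∑ s ∈ Finset.univ.erase jj, u s * G s jj
          = (∑ s ∈ Finset.univ.erase jj, (u s) ^ 2 / a s) * (-1 / u jj) := by
        rw [Finset.sum_mul]
        refine Finset.sum_congr rfl fun s hs => ?_
        rw [hGim s (Finset.ne_of_mem_erase hs)]
        have := ha s (Finset.ne_of_mem_erase hs)
        field_simp
      rw [hsum, hGmm, if_pos rfl]
      field_simp
      ring
    · rw [if_neg hj, hGmi jj hj]
      have hjmem : jj ∈ Finset.univ.erase m := Finset.mem_erase.2 ⟨hj, Finset.mem_univ jj⟩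
      rw [Finset.sum_eq_single_of_mem jj hjmem
        (fun b hb hbj => by rw [hGij b jj hbj (Finset.ne_of_mem_erase hb) hj, mul_zero])]
      rw [hGii jj hj]
      have := ha jj hj
      field_simp
      ring
  intro i j
  have expand : ∑ s, (a i * (if i = s then (1 : ℝ) else 0) - K * u i * u s) * G s j
      = a i * G i j - K * u i * ∑ s, u s * G s j := by
    simp only [sub_mul]
    rw [Finset.sum_sub_distrib]
    congr 1
    · have h1 : ∀ s : Fin N, (a i * if i = s then (1 : ℝ) else 0) * G s j
          = if i = s then a i * G s j else 0 := fun s => by by_cases h : i = s <;> simp [h]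
      simp only [h1]
      rw [Finset.sum_ite_eq]
      simp
    · rw [Finset.mul_sum]
      exact Finset.sum_congr rfl fun s _ => by ring
  rw [expand, key]
  by_cases hj : j = m
  · rw [if_pos hj]
    by_cases hi : i = m
    · rw [if_pos (hi.trans hj.symm), hi, ham, zero_mul]
      field_simp
      norm_num
    · rw [if_neg (fun h => hi (h.trans hj)), hj, hGim i hi]
      have := ha i hi
      field_simp
      ring
  · rw [if_neg hj, mul_zero, sub_zero]
    by_cases hij : i = j
    · rw [if_pos hij, hij, hGii j hj]
      have := ha j hj
      field_simp
    · rw [if_neg hij]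
      by_cases hi : i = m
      · rw [hi, ham, zero_mul]
      · rw [hGij i j hij hi hj, mul_zero]
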